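/- Suppose ℱ = {(F_ε, N_ε)}_{ε∈(0,1)} is a family of probing maps for the open set 𝔊 ⊆ 𝔅 (relative to 𝔅'), and suppose G ⊆ 𝔊 is ℱ-predominant. Then G is dense in 𝔊 with respect to the norm topology of 𝔅. -/
import Mathlib


open MeasureTheory Set

noncomputable section

/-- The coordinate space `ℝ^L`. -/
abbrev ProbeCoord (L : ℕ) := EuclideanSpace ℝ (Fin L)

/-- Index type for `N ∈ ℕ ∪ {∞}` coordinates. -/
def ProbeIdx (N : ℕ∞) : Type := {i : ℕ // (i : ℕ∞) < N}

/-- The space in which the parameter set `Σ_N` lives: functions from indices to `ℝ^L`. -/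
abbrev ProbeSpace (L : ℕ) (N : ℕ∞) := ProbeIdx N → ProbeCoord L

/-- The set `Σ_N`: the product of `N` copies of the closed unit ball of `ℝ^L`. -/
def probeBall (L : ℕ) (N : ℕ∞) : Set (ProbeSpace L N) :=
  {σ | ∀ i, σ i ∈ Metric.closedBall (0 : ProbeCoord L) 1}

/-- The sup-distance `‖σ − τ‖_∞ = sup_j ‖σ_j − τ_j‖` on `Σ_N`. -/
def probeSupDist {L : ℕ} {N : ℕ∞} (σ τ : ProbeSpace L N) : ℝ :=
  ⨆ i, ‖σ i - τ i‖

/-- Lebesgue measure on the closed unit ball of `ℝ^L`, normalized to total mass `1`. -/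
def unitBallMeasure (L : ℕ) : Measure (ProbeCoord L) :=
  (volume (Metric.closedBall (0 : ProbeCoord L) 1))⁻¹ •
    volume.restrict (Metric.closedBall (0 : ProbeCoord L) 1)

/-- `μ` is the product measure `m_{Σ_N} = ⊗_j m` of copies of the normalized Lebesgue measure `m`
on the closed unit ball of `ℝ^L`: it is the (unique) probability measure giving each measurable
cylinder set its product measure. -/
def IsProbeProductMeasure (L : ℕ) (N : ℕ∞) (μ : Measure (ProbeSpace L N)) : Prop :=
  IsProbabilityMeasure μ ∧
    ∀ (s : Finset (ProbeIdx N)) (A : ProbeIdx N → Set (ProbeCoord L)),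
      (∀ i, MeasurableSet (A i)) →
      μ {σ | ∀ i ∈ s, σ i ∈ A i} = ∏ i ∈ s, unitBallMeasure L (A i)

/-- `K` is a bounded subset of the open set `G` of the Banach space `B`: it is norm-bounded and
at positive distance from the complement of `G` (vacuously if `G` is everything). -/
def IsBoundedSubset {B : Type*} [NormedAddCommGroup B] (G K : Set B) : Prop :=
  K ⊆ G ∧ Bornology.IsBounded K ∧ ∃ c : ℝ, 0 < c ∧ ∀ x ∈ K, ∀ y ∈ Gᶜ, c ≤ dist x y

/-- A family of probing maps `ℱ = {(F_ε, N_ε)}_{ε ∈ (0,1)}` for the open set `G ⊆ B`, relative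
to the Banach space `B'` into which `B` embeds via `ι`. -/
structure ProbingFamily (L : ℕ) {B B' : Type*}
    [NormedAddCommGroup B] [NormedSpace ℝ B]
    [NormedAddCommGroup B'] [NormedSpace ℝ B']
    (ι : B →L[ℝ] B') (G : Set B) : Type _ where
  /-- The number `N_ε ∈ ℕ ∪ {∞}` of coordinates of the parameter space `Σ_{N_ε}`. -/
  N : ℝ → ℕ∞
  /-- The closed bounded exhausting sets `𝔊_ε`. -/
  Gs : ℝ → Set B
  /-- The probing maps `F_ε`. -/
  F : (ε : ℝ) → B → ProbeSpace L (N ε) → B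
  Gs_closed : ∀ ε ∈ Ioo (0 : ℝ) 1, IsClosed (Gs ε)
  Gs_bounded : ∀ ε ∈ Ioo (0 : ℝ) 1, IsBoundedSubset G (Gs ε)
  Gs_nested : ∀ ε₁ ∈ Ioo (0 : ℝ) 1, ∀ ε₂ ∈ Ioo (0 : ℝ) 1, ε₁ < ε₂ → Gs ε₂ ⊆ Gs ε₁
  Gs_union : G ⊆ ⋃ ε ∈ Ioo (0 : ℝ) 1, Gs ε
  Gs_absorbs : ∀ K : Set B, IsBoundedSubset G K →
    ∃ ε₁ > 0, ∀ ε ∈ Ioo (0 : ℝ) 1, ε < ε₁ → K ⊆ Gs ε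
  /-- `F_ε` maps `𝔊_ε × Σ_{N_ε}` into `G`. -/
  F_mem : ∀ ε ∈ Ioo (0 : ℝ) 1, ∀ g ∈ Gs ε, ∀ σ ∈ probeBall L (N ε), F ε g σ ∈ G
  /-- `F_ε(g, 0) = g`. -/
  F_zero : ∀ ε ∈ Ioo (0 : ℝ) 1, ∀ g ∈ Gs ε, F ε g 0 = g
  /-- `F_ε` is continuous on `𝔊_ε × Σ_{N_ε}` (w.r.t. the sup-distance on `Σ_{N_ε}`). -/
  F_cont : ∀ ε ∈ Ioo (0 : ℝ) 1, ∀ g ∈ Gs ε, ∀ σ ∈ probeBall L (N ε), ∀ δ > (0 : ℝ),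
    ∃ η > (0 : ℝ), ∀ g' ∈ Gs ε, ∀ σ' ∈ probeBall L (N ε),
      ‖g' - g‖ < η → probeSupDist σ' σ < η → ‖F ε g' σ' - F ε g σ‖ < δ
  /-- Condition (i): `sup_{g ∈ K ∩ 𝔊_ε} sup_σ ‖F_ε(g,σ) − g‖_B → 0` as `ε → 0⁺`. -/
  F_close : ∀ K : Set B, IsBoundedSubset G K → ∀ δ > (0 : ℝ), ∃ ε₁ > (0 : ℝ),
    ∀ ε ∈ Ioo (0 : ℝ) 1, ε < ε₁ → ∀ g ∈ K ∩ Gs ε, ∀ σ ∈ probeBall L (N ε),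
      ‖F ε g σ - g‖ ≤ δ
  /-- Condition (ii): the Lipschitz ratio in `σ` of `ι ∘ F_ε`, measured in `B'`, tends to `0`. -/
  F_lipRatio : ∀ K : Set B, IsBoundedSubset G K → ∀ δ > (0 : ℝ), ∃ ε₁ > (0 : ℝ),
    ∀ ε ∈ Ioo (0 : ℝ) 1, ε < ε₁ → ∀ g ∈ K ∩ Gs ε,
      ∀ σ₁ ∈ probeBall L (N ε), ∀ σ₂ ∈ probeBall L (N ε),
        ‖ι (F ε g σ₁) - ι (F ε g σ₂)‖ ≤ δ * probeSupDist σ₁ σ₂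
  /-- Condition (iii): `(g,σ) ↦ ι(F_ε(g,σ))` is Lipschitz on `𝔊_ε × Σ_{N_ε}`. -/
  F_lip : ∀ ε ∈ Ioo (0 : ℝ) 1, ∃ CL : ℝ, ∀ g ∈ Gs ε, ∀ g' ∈ Gs ε,
    ∀ σ ∈ probeBall L (N ε), ∀ σ' ∈ probeBall L (N ε),
      ‖ι (F ε g σ) - ι (F ε g' σ')‖ ≤ CL * (‖g - g'‖ + probeSupDist σ σ')
  /-- Condition (iii): for fixed `σ`, `g ↦ ι(F_ε(g,σ))` is Fréchet differentiable and its
  derivative extends to a bounded operator `D` on `B'` (i.e. the derivative is `D ∘ ι`). -/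
  F_diff : ∀ ε ∈ Ioo (0 : ℝ) 1, ∀ g ∈ Gs ε, ∀ σ ∈ probeBall L (N ε),
    ∃ D : B' →L[ℝ] B', HasFDerivAt (fun x => ι (F ε x σ)) (D.comp ι) g
  /-- Condition (iii): `‖D_g F̃_ε − I‖_{B'→B'} → 0` uniformly on bounded sets as `ε → 0⁺`. -/
  F_derClose : ∀ K : Set B, IsBoundedSubset G K → ∀ δ > (0 : ℝ), ∃ ε₁ > (0 : ℝ),
    ∀ ε ∈ Ioo (0 : ℝ) 1, ε < ε₁ → ∀ g ∈ K ∩ Gs ε, ∀ σ ∈ probeBall L (N ε),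
      ∀ D : B' →L[ℝ] B', HasFDerivAt (fun x => ι (F ε x σ)) (D.comp ι) g →
        ‖D - ContinuousLinearMap.id ℝ B'‖ ≤ δ

/-- `Lset ⊆ G` is `ℱ`-thin (relative to the product measures `m N` on the parameter spaces). -/
def IsThin (L : ℕ) {B B' : Type*}
    [NormedAddCommGroup B] [NormedSpace ℝ B] [MeasurableSpace B]
    [NormedAddCommGroup B'] [NormedSpace ℝ B']
    {ι : B →L[ℝ] B'} {G : Set B}
    (m : (N : ℕ∞) → Measure (ProbeSpace L N))
    (P : ProbingFamily L ι G) (Lset : Set B) : Prop :=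
  ∀ K : Set B, IsBoundedSubset G K →
    ∃ L₀ : Set B, MeasurableSet L₀ ∧ Lset ⊆ L₀ ∧
      ∃ S : (ε : ℝ) → B → Set (ProbeSpace L (P.N ε)),
        (∀ ε ∈ Ioo (0 : ℝ) 1, K ⊆ P.Gs ε → ∀ g ∈ K,
          MeasurableSet (S ε g) ∧
            {σ ∈ probeBall L (P.N ε) | P.F ε g σ ∈ L₀} ⊆ S ε g) ∧
        ∀ δ : ENNReal, 0 < δ → ∃ ε₁ > (0 : ℝ),
          ∀ ε ∈ Ioo (0 : ℝ) 1, ε < ε₁ → K ⊆ P.Gs ε → ∀ g ∈ K,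
            m (P.N ε) (S ε g) ≤ δ

/-- `Gd ⊆ G` is `ℱ`-predominant if its complement in `G` is `ℱ`-thin. -/
def IsPredominant (L : ℕ) {B B' : Type*}
    [NormedAddCommGroup B] [NormedSpace ℝ B] [MeasurableSpace B]
    [NormedAddCommGroup B'] [NormedSpace ℝ B']
    {ι : B →L[ℝ] B'} {G : Set B}
    (m : (N : ℕ∞) → Measure (ProbeSpace L N))
    (P : ProbingFamily L ι G) (Gd : Set B) : Prop :=
  IsThin L m P (G \ Gd)

/-- If `ℱ` is a family of probing maps for the open set `G ⊆ B` (relative to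
`B'`) and `Gd ⊆ G` is `ℱ`-predominant, then `Gd` is dense in `G` for the norm topology of `B`. -/
instance {N : ℕ∞} : Countable (ProbeIdx N) := by
  unfold ProbeIdx; infer_instance

theorem predominant_dense
    (L : ℕ) (hL : 1 ≤ L) {B B' : Type*}
    [NormedAddCommGroup B] [NormedSpace ℝ B] [MeasurableSpace B] [BorelSpace B]
    [NormedAddCommGroup B'] [NormedSpace ℝ B']
    (ι : B →L[ℝ] B') (hι : Function.Injective ι) (hιdense : DenseRange ι)
    (G : Set B) (hG : IsOpen G)
    (m : (N : ℕ∞) → Measure (ProbeSpace L N))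
    (hm : ∀ N : ℕ∞, IsProbeProductMeasure L N (m N))
    (P : ProbingFamily L ι G)
    (Gd : Set B) (hGd : Gd ⊆ G) (hpre : IsPredominant L m P Gd) :
    G ⊆ closure Gd := by
  intro g hg
  rw [Metric.mem_closure_iff]
  intro δ hδ
  obtain ⟨r, hr, hball⟩ := Metric.isOpen_iff.mp hG g hg
  have hK : IsBoundedSubset G {g} := by
    refine ⟨singleton_subset_iff.mpr hg, Bornology.isBounded_singleton, r, hr, ?_⟩
    rintro x rfl y hy
    by_contra h
    push_neg at h
    exact hy (hball (by simpa [Metric.mem_ball, dist_comm] using h))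
  obtain ⟨L₀, hL₀meas, hL₀sub, S, hS1, hS2⟩ := hpre {g} hK
  obtain ⟨ε₁, hε₁, hthin⟩ := hS2 (1/2) (by norm_num)
  obtain ⟨ε₂, hε₂, hclose⟩ := P.F_close {g} hK (δ/2) (by linarith)
  obtain ⟨ε₃, hε₃, habs⟩ := P.Gs_absorbs {g} hK
  set M := min (min ε₁ ε₂) (min ε₃ 1) with hM
  have hMpos : 0 < M := by
    simp only [hM, lt_min_iff]
    exact ⟨⟨hε₁, hε₂⟩, hε₃, one_pos⟩
  set ε := M / 2 with hεdef
  have hεpos : 0 < ε := by positivity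
  have hεM : ε < M := by rw [hεdef]; linarith
  have hε1 : ε < ε₁ := lt_of_lt_of_le hεM ((min_le_left _ _).trans (min_le_left _ _))
  have hε2 : ε < ε₂ := lt_of_lt_of_le hεM ((min_le_left _ _).trans (min_le_right _ _))
  have hε3 : ε < ε₃ := lt_of_lt_of_le hεM ((min_le_right _ _).trans (min_le_left _ _))
  have hεlt1 : ε < 1 := lt_of_lt_of_le hεM ((min_le_right _ _).trans (min_le_right _ _))
  have hεI : ε ∈ Ioo (0:ℝ) 1 := ⟨hεpos, hεlt1⟩
  have hKG : ({g} : Set B) ⊆ P.Gs ε := habs ε hεI hε3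
  have hgGs : g ∈ P.Gs ε := hKG rfl
  obtain ⟨hSmeas, hSsub⟩ := hS1 ε hεI hKG g rfl
  have hSle := hthin ε hεI hε1 hKG g rfl
  -- the probe ball has full measure
  haveI : IsProbabilityMeasure (m (P.N ε)) := (hm (P.N ε)).1
  have hvol_pos : 0 < volume (Metric.closedBall (0:ProbeCoord L) 1) :=
    Metric.measure_closedBall_pos _ _ one_pos
  have hvol_lt : volume (Metric.closedBall (0:ProbeCoord L) 1) < ⊤ :=
    MeasureTheory.measure_closedBall_lt_top
  have hunit : unitBallMeasure L (Metric.closedBall (0:ProbeCoord L) 1) = 1 := by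
    rw [unitBallMeasure, Measure.smul_apply,
      Measure.restrict_apply measurableSet_closedBall, inter_self,
      smul_eq_mul, ENNReal.inv_mul_cancel hvol_pos.ne' hvol_lt.ne]
  have hcyl : ∀ i : ProbeIdx (P.N ε),
      m (P.N ε) {σ | σ i ∈ Metric.closedBall (0:ProbeCoord L) 1} = 1 := by
    intro i
    have h := (hm (P.N ε)).2 {i} (fun _ => Metric.closedBall 0 1)
      (fun _ => measurableSet_closedBall)
    simpa [hunit] using h
  have hballfull : m (P.N ε) (probeBall L (P.N ε)) = 1 := by
    have hcompl : m (P.N ε) (probeBall L (P.N ε))ᶜ = 0 := by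
      have hsub : (probeBall L (P.N ε))ᶜ ⊆
          ⋃ i, {σ : ProbeSpace L (P.N ε) | σ i ∈ Metric.closedBall (0:ProbeCoord L) 1}ᶜ := by
        intro σ hσ
        simp only [probeBall, mem_setOf_eq, not_forall, mem_compl_iff] at hσ
        obtain ⟨i, hi⟩ := hσ
        exact mem_iUnion.mpr ⟨i, hi⟩
      refine measure_mono_null hsub (measure_iUnion_null fun i => ?_)
      have hmeas : MeasurableSet {σ : ProbeSpace L (P.N ε) |
          σ i ∈ Metric.closedBall (0:ProbeCoord L) 1} :=
        (measurable_pi_apply i) measurableSet_closedBall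
      rw [measure_compl hmeas (measure_ne_top _ _), hcyl i, measure_univ, tsub_self]
    have hmeasB : MeasurableSet (probeBall L (P.N ε)) := by
      have heq : probeBall L (P.N ε) =
          ⋂ i, (fun σ : ProbeSpace L (P.N ε) => σ i) ⁻¹' Metric.closedBall 0 1 := by
        ext σ; simp [probeBall]
      rw [heq]
      exact MeasurableSet.iInter fun i => (measurable_pi_apply i) measurableSet_closedBall
    have h1 := measure_compl (μ := m (P.N ε)) hmeasB (measure_ne_top _ _)
    rw [hcompl, measure_univ] at h1
    have h2 : m (P.N ε) (probeBall L (P.N ε)) ≤ 1 := prob_le_one (μ := m (P.N ε))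
    have h3 := tsub_eq_zero_iff_le.mp h1.symm
    exact le_antisymm h2 h3
  have hne : (probeBall L (P.N ε) \ S ε g).Nonempty := by
    rw [nonempty_iff_ne_empty]
    intro h
    rw [diff_eq_empty] at h
    have hle : m (P.N ε) (probeBall L (P.N ε)) ≤ m (P.N ε) (S ε g) := measure_mono h
    rw [hballfull] at hle
    have : (1:ENNReal) ≤ 1/2 := hle.trans hSle
    norm_num at this
  obtain ⟨σ, hσball, hσS⟩ := hne
  have hFG : P.F ε g σ ∈ G := P.F_mem ε hεI g hgGs σ hσball
  have hFGd : P.F ε g σ ∈ Gd := by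
    by_contra h
    exact hσS (hSsub ⟨hσball, hL₀sub ⟨hFG, h⟩⟩)
  refine ⟨P.F ε g σ, hFGd, ?_⟩
  have hd := hclose ε hεI hε2 g ⟨rfl, hgGs⟩ σ hσball
  calc dist g (P.F ε g σ) = ‖P.F ε g σ - g‖ := by rw [dist_comm, dist_eq_norm]
  _ ≤ δ/2 := hd
  _ < δ := by linarith


end
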